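/- Let λ ≠ 0 and let g : [0,1] → ℝ be continuous and satisfy λ·g(t) = ∫₀^{1−t} g(s) ds for all t ∈ [0,1], with g not identically zero. Then λ = (−1)^{(j−1)/2}·2/(π·j) for some odd positive integer j, and g(t) = C·cos(t/λ) for some constant C. -/

import Mathlib

open Set MeasureTheory Real

/-- if λ ≠ 0 and g : [0,1] → ℝ is continuous, not identically zero, and
satisfies λ·g(t) = ∫₀^{1−t} g(s) ds, then λ = (−1)^{(j−1)/2}·2/(π·j) for some odd
positive integer j, and g(t) = C·cos(t/λ) for some constant C. -/
theorem eigen_123_231_312_equation (lam : ℝ) (hlam : lam ≠ 0) (g : ℝ → ℝ)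
    (hg : ContinuousOn g (Set.Icc 0 1))
    (heq : ∀ t ∈ Set.Icc (0 : ℝ) 1, lam * g t = ∫ s in Set.Icc (0 : ℝ) (1 - t), g s)
    (hnontriv : ∃ t ∈ Set.Icc (0 : ℝ) 1, g t ≠ 0) :
    (∃ j : ℕ, Odd j ∧ 0 < j ∧
        lam = (-1 : ℝ) ^ ((j - 1) / 2) * (2 / (Real.pi * (j : ℝ)))) ∧
    ∃ C : ℝ, ∀ t ∈ Set.Icc (0 : ℝ) 1, g t = C * Real.cos (t / lam) := by
  have hint : IntervalIntegrable g volume 0 1 := hg.intervalIntegrable_of_Icc zero_le_one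
  have heq' : ∀ t ∈ Icc (0:ℝ) 1, lam * g t = ∫ s in (0:ℝ)..(1-t), g s := by
    intro t ht
    rw [heq t ht, intervalIntegral.integral_of_le (by linarith [ht.2]),
      ← MeasureTheory.integral_Icc_eq_integral_Ioc]
  set G : ℝ → ℝ := fun y => ∫ s in (0:ℝ)..y, g s with hGdef
  -- FTC: derivative of G within Icc
  have hGd : ∀ x ∈ Icc (0:ℝ) 1, HasDerivWithinAt G (g x) (Icc 0 1) x := by
    intro x hx
    haveI : Fact (x ∈ Icc (0:ℝ) 1) := ⟨hx⟩
    exact intervalIntegral.integral_hasDerivWithinAt_right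
      (hint.mono_set (by rw [uIcc_of_le hx.1, uIcc_of_le zero_le_one]; exact Icc_subset_Icc le_rfl hx.2))
      ⟨Icc 0 1, self_mem_nhdsWithin, hg.aestronglyMeasurable measurableSet_Icc⟩
      (hg x hx)
  have hmaps : ∀ y ∈ Icc (0:ℝ) 1, (1 - y) ∈ Icc (0:ℝ) 1 := by
    intro y hy; exact ⟨by linarith [hy.2], by linarith [hy.1]⟩
  have hsub : ∀ x : ℝ, HasDerivWithinAt (fun t : ℝ => 1 - t) (-1) (Icc 0 1) x := by
    intro x
    exact (hasDerivWithinAt_id x (Icc (0:ℝ) 1)).const_sub 1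
  -- derivative of g
  have hgd : ∀ x ∈ Icc (0:ℝ) 1, HasDerivWithinAt g (-(g (1 - x)) / lam) (Icc 0 1) x := by
    intro x hx
    have h2 := HasDerivWithinAt.comp x (hGd (1 - x) (hmaps x hx)) (hsub x) hmaps
    have h3 : HasDerivWithinAt (fun t => (1/lam) * G (1 - t))
        ((1/lam) * (g (1 - x) * -1)) (Icc 0 1) x := h2.const_mul _
    refine (h3.congr (fun y hy => ?_) ?_).congr_deriv (by field_simp)
    · field_simp
      linarith [heq' y hy]
    · field_simp
      linarith [heq' x hx]
  -- derivative of t ↦ g (1 - t)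
  have hgd' : ∀ x ∈ Icc (0:ℝ) 1,
      HasDerivWithinAt (fun t => g (1 - t)) (g x / lam) (Icc 0 1) x := by
    intro x hx
    have h2 := HasDerivWithinAt.comp x (hgd (1 - x) (hmaps x hx)) (hsub x) hmaps
    exact h2.congr_deriv (by simp only [sub_sub_cancel]; ring)
  set C := g 0 with hC
  have hg1 : g 1 = 0 := by
    have := heq' 1 (by norm_num)
    simp at this
    rcases this with h | h
    · exact absurd h hlam
    · exact h
  set u : ℝ → ℝ := fun t => g t - C * Real.cos (t / lam) with hu
  set v : ℝ → ℝ := fun t => g (1 - t) - C * Real.sin (t / lam) with hv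
  have hcosd : ∀ x : ℝ, HasDerivWithinAt (fun t => C * Real.cos (t / lam))
      (-(C * Real.sin (x / lam)) / lam) (Icc 0 1) x := by
    intro x
    have h1 : HasDerivAt (fun t : ℝ => t / lam) (1 / lam) x := by
      simpa using (hasDerivAt_id x).div_const lam
    have := ((Real.hasDerivAt_cos (x / lam)).comp x h1).const_mul C
    refine this.hasDerivWithinAt.congr_deriv ?_
    field_simp
  have hsind : ∀ x : ℝ, HasDerivWithinAt (fun t => C * Real.sin (t / lam))
      ((C * Real.cos (x / lam)) / lam) (Icc 0 1) x := by
    intro x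
    have h1 : HasDerivAt (fun t : ℝ => t / lam) (1 / lam) x := by
      simpa using (hasDerivAt_id x).div_const lam
    have := ((Real.hasDerivAt_sin (x / lam)).comp x h1).const_mul C
    refine this.hasDerivWithinAt.congr_deriv ?_
    field_simp
  have hud : ∀ x ∈ Icc (0:ℝ) 1, HasDerivWithinAt u (-(v x) / lam) (Icc 0 1) x := by
    intro x hx
    have := (hgd x hx).sub (hcosd x)
    refine this.congr_deriv ?_
    simp only [hv]
    field_simp
    all_goals ring
  have hvd : ∀ x ∈ Icc (0:ℝ) 1, HasDerivWithinAt v (u x / lam) (Icc 0 1) x := by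
    intro x hx
    have := (hgd' x hx).sub (hsind x)
    refine this.congr_deriv ?_
    simp only [hu]
    field_simp
  set F : ℝ → ℝ := fun t => u t ^ 2 + v t ^ 2 with hF
  have hFd : ∀ x ∈ Icc (0:ℝ) 1, HasDerivWithinAt F 0 (Icc 0 1) x := by
    intro x hx
    have := ((hud x hx).pow 2).add ((hvd x hx).pow 2)
    refine this.congr_deriv ?_
    push_cast
    field_simp
    ring
  have hFcont : ContinuousOn F (Icc 0 1) := fun x hx =>
    (hFd x hx).continuousWithinAt
  have hFconst : ∀ x ∈ Icc (0:ℝ) 1, F x = F 0 := by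
    refine constant_of_has_deriv_right_zero hFcont (fun x hx => ?_)
    exact (hFd x (Ico_subset_Icc_self hx)).mono_of_mem_nhdsWithin
      (Icc_mem_nhdsGE_of_mem hx)
  have hF0 : F 0 = 0 := by
    simp [hF, hu, hv, hg1, hC]
  have hzero : ∀ x ∈ Icc (0:ℝ) 1, u x = 0 ∧ v x = 0 := by
    intro x hx
    have h := hFconst x hx
    rw [hF0] at h
    simp only [hF] at h
    constructor
    · nlinarith [sq_nonneg (u x), sq_nonneg (v x)]
    · nlinarith [sq_nonneg (u x), sq_nonneg (v x)]
  have hgform : ∀ t ∈ Icc (0:ℝ) 1, g t = C * Real.cos (t / lam) := by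
    intro t ht
    have := (hzero t ht).1
    simp only [hu] at this
    linarith
  have hCne : C ≠ 0 := by
    obtain ⟨t, ht, hgt⟩ := hnontriv
    intro h
    rw [hgform t ht, h, zero_mul] at hgt
    exact hgt rfl
  have hsin1 : Real.sin (1 / lam) = 1 := by
    have h1 := (hzero 1 (by norm_num)).2
    have h2 : g (1 - 1) - C * Real.sin (1 / lam) = 0 := h1
    norm_num at h2
    have hCg : (C : ℝ) = g 0 := rfl
    refine mul_left_cancel₀ hCne ?_
    rw [mul_one, one_div]
    linarith
  refine ⟨?_, C, hgform⟩
  rw [Real.sin_eq_one_iff] at hsin1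
  obtain ⟨k, hk⟩ := hsin1
  have hpi := Real.pi_pos
  rcases le_or_gt 0 k with hk0 | hk0
  · lift k to ℕ using hk0 with m
    refine ⟨4 * m + 1, ⟨2 * m, by ring⟩, by positivity, ?_⟩
    have hev : Even ((4 * m + 1 - 1) / 2) := ⟨m, by omega⟩
    rw [hev.neg_one_pow, one_mul]
    push_cast at hk ⊢
    rw [eq_div_iff hlam] at hk
    have hne : (π * (4 * (m : ℝ) + 1)) ≠ 0 := by positivity
    rw [eq_div_iff hne]
    linear_combination 2 * hk
  · obtain ⟨m, rfl⟩ : ∃ m : ℕ, k = -(m + 1) := by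
      refine ⟨(-k - 1).toNat, ?_⟩; omega
    refine ⟨4 * m + 3, ⟨2 * m + 1, by ring⟩, by positivity, ?_⟩
    have hod : Odd ((4 * m + 3 - 1) / 2) := ⟨m, by omega⟩
    rw [hod.neg_one_pow]
    push_cast at hk ⊢
    rw [eq_div_iff hlam] at hk
    have hne : (π * (4 * (m : ℝ) + 3)) ≠ 0 := by positivity
    rw [show (-1 : ℝ) * (2 / (π * (4 * (m : ℝ) + 3))) = (-2) / (π * (4 * (m : ℝ) + 3)) by ring,
      eq_div_iff hne]
    linear_combination (-2) * hk
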